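/- Let 0 ≤ h ≤ k ≤ n be integers with h even, and let n' = n + h/2. Suppose S ⊆ [1,n]×[1,n] contains exactly k points in every row and column, and every non-horizontal, non-vertical line contains at most k − h points of S. Then there exists S'' ⊆ [1,n']×[1,n'] of size k·n' such that every line in the plane contains at most k points of S''. -/

import Mathlib

open scoped Classical

/-- The integer grid `[1,n] × [1,n]`. -/
noncomputable def gridZ (n : ℕ) : Finset (ℤ × ℤ) := Finset.Icc (1, 1) ((n : ℤ), (n : ℤ))

lemma mem_gridZ {n : ℕ} {p : ℤ × ℤ} : p ∈ gridZ n ↔ 1 ≤ p.1 ∧ p.1 ≤ n ∧ 1 ≤ p.2 ∧ p.2 ≤ n := by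
  simp [gridZ, Finset.mem_Icc, Prod.le_def]; tauto


lemma fiber_sum_card {T : Finset (ℤ × ℤ)} {W : Finset ℤ} {kk : ℕ} (g : ℤ × ℤ → ℤ)
    (hW : ∀ w ∈ W, (T.filter (fun p => g p = w)).card = kk) :
    (T.filter (fun p => g p ∈ W)).card = W.card * kk := by
  rw [Finset.card_eq_sum_card_fiberwise (f := g) (s := T.filter (fun p => g p ∈ W)) (t := W)
    (fun p hp => (Finset.mem_filter.1 hp).2)]
  rw [Finset.sum_congr rfl (fun w hw => ?_), Finset.sum_const, smul_eq_mul]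
  rw [Finset.filter_filter]
  rw [show (T.filter fun p => g p ∈ W ∧ g p = w) = T.filter fun p => g p = w from
    Finset.filter_congr (fun p _ => ⟨fun hh => hh.2, fun hh => ⟨hh ▸ hw, hh⟩⟩)]
  exact hW w hw


lemma hall_step (n kk : ℕ) (hkk : 1 ≤ kk) (T : Finset (ℤ × ℤ)) (hT : T ⊆ gridZ n)
    (hr : ∀ y ∈ Finset.Icc (1:ℤ) (n:ℤ), (T.filter (fun p => p.2 = y)).card = kk)
    (hc : ∀ x ∈ Finset.Icc (1:ℤ) (n:ℤ), (T.filter (fun p => p.1 = x)).card = kk) :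
    ∃ f : ℤ → ℤ, Set.InjOn f (Finset.Icc (1:ℤ) (n:ℤ)) ∧
      (∀ y ∈ Finset.Icc (1:ℤ) (n:ℤ), f y ∈ Finset.Icc (1:ℤ) (n:ℤ) ∧ (f y, y) ∈ T) ∧
      (∀ x ∈ Finset.Icc (1:ℤ) (n:ℤ), ∃ y ∈ Finset.Icc (1:ℤ) (n:ℤ), f y = x) := by
  set I : Finset ℤ := Finset.Icc (1:ℤ) (n:ℤ) with hI
  set t : {y // y ∈ I} → Finset ℤ :=
    fun y => (T.filter (fun p => p.2 = y.1)).image Prod.fst with ht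
  have hall : ∀ s : Finset {y // y ∈ I}, s.card ≤ (s.biUnion t).card := by
    intro s
    set Y : Finset ℤ := s.image Subtype.val with hY
    set X : Finset ℤ := s.biUnion t with hX
    have hYcard : Y.card = s.card := Finset.card_image_of_injective _ Subtype.val_injective
    have hYI : ∀ y ∈ Y, y ∈ I := by
      intro y hy; rcases Finset.mem_image.1 hy with ⟨u, _, rfl⟩; exact u.2
    have hEcard : (T.filter (fun p => p.2 ∈ Y)).card = Y.card * kk :=
      fiber_sum_card Prod.snd (fun w hw => hr w (hYI w hw))
    have hXI : ∀ x ∈ X, x ∈ I := by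
      intro x hx
      rcases Finset.mem_biUnion.1 hx with ⟨u, hu, hxu⟩
      rcases Finset.mem_image.1 hxu with ⟨p, hp, rfl⟩
      have := hT (Finset.mem_filter.1 hp).1
      rw [mem_gridZ] at this
      exact Finset.mem_Icc.2 ⟨this.1, this.2.1⟩
    have hsub : T.filter (fun p => p.2 ∈ Y) ⊆ T.filter (fun p => p.1 ∈ X) := by
      intro p hp
      rcases Finset.mem_filter.1 hp with ⟨hpT, hpY⟩
      rcases Finset.mem_image.1 hpY with ⟨u, hu, hup⟩
      refine Finset.mem_filter.2 ⟨hpT, Finset.mem_biUnion.2 ⟨u, hu, ?_⟩⟩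
      exact Finset.mem_image.2 ⟨p, Finset.mem_filter.2 ⟨hpT, hup.symm⟩, rfl⟩
    have hXcard : (T.filter (fun p => p.1 ∈ X)).card = X.card * kk :=
      fiber_sum_card Prod.fst (fun w hw => hc w (hXI w hw))
    have hle : Y.card * kk ≤ X.card * kk := by
      rw [← hEcard, ← hXcard]; exact Finset.card_le_card hsub
    have := Nat.le_of_mul_le_mul_right (hYcard ▸ hle) (show 0 < kk from hkk)
    exact this
  obtain ⟨f0, hf0inj, hf0mem⟩ := (Finset.all_card_le_biUnion_card_iff_exists_injective t).1 hall
  set f : ℤ → ℤ := fun y => if hy : y ∈ I then f0 ⟨y, hy⟩ else y with hf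
  have hmem : ∀ y ∈ I, f y ∈ I ∧ (f y, y) ∈ T := by
    intro y hy
    have h1 : f y = f0 ⟨y, hy⟩ := by rw [hf]; simp [hy]
    have h2 := hf0mem ⟨y, hy⟩
    rw [ht] at h2
    rcases Finset.mem_image.1 h2 with ⟨p, hp, hp1⟩
    rcases Finset.mem_filter.1 hp with ⟨hpT, hp2⟩
    have hpeq : p = (f y, y) := by
      rw [Prod.ext_iff]; exact ⟨by rw [h1, ← hp1], hp2⟩
    constructor
    · have h3 := hT hpT; rw [mem_gridZ] at h3
      rw [hI]; rw [hpeq] at h3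
      exact Finset.mem_Icc.2 ⟨h3.1, h3.2.1⟩
    · rw [← hpeq]; exact hpT
  have hinj : Set.InjOn f (I : Set ℤ) := by
    intro y1 hy1 y2 hy2 heq
    have hy1' : y1 ∈ I := Finset.mem_coe.1 hy1
    have hy2' : y2 ∈ I := Finset.mem_coe.1 hy2
    have e1 : f y1 = f0 ⟨y1, hy1'⟩ := by rw [hf]; simp [hy1']
    have e2 : f y2 = f0 ⟨y2, hy2'⟩ := by rw [hf]; simp [hy2']
    have := hf0inj (show f0 ⟨y1, hy1'⟩ = f0 ⟨y2, hy2'⟩ by rw [← e1, ← e2, heq])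
    exact congrArg Subtype.val this
  have hsurj : ∀ x ∈ I, ∃ y ∈ I, f y = x := by
    have himg : I.image f = I := by
      apply Finset.eq_of_subset_of_card_le
      · intro x hx; rcases Finset.mem_image.1 hx with ⟨y, hy, rfl⟩; exact (hmem y hy).1
      · rw [Finset.card_image_of_injOn (by exact_mod_cast hinj)]
    intro x hx
    rw [← himg] at hx
    rcases Finset.mem_image.1 hx with ⟨y, hy, rfl⟩
    exact ⟨y, hy, rfl⟩
  exact ⟨f, hinj, hmem, hsurj⟩

lemma matchings (n k : ℕ) (S : Finset (ℤ × ℤ)) (hsub : S ⊆ gridZ n)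
    (hrow : ∀ y ∈ Finset.Icc (1 : ℤ) (n : ℤ), (S.filter (fun p => p.2 = y)).card = k)
    (hcol : ∀ x ∈ Finset.Icc (1 : ℤ) (n : ℤ), (S.filter (fun p => p.1 = x)).card = k) :
    ∀ q : ℕ, q ≤ k → ∃ (F : Fin q → ℤ → ℤ) (T : Finset (ℤ × ℤ)),
      T ⊆ S ∧
      (∀ y ∈ Finset.Icc (1:ℤ) (n:ℤ), (T.filter (fun p => p.2 = y)).card = k - q) ∧
      (∀ x ∈ Finset.Icc (1:ℤ) (n:ℤ), (T.filter (fun p => p.1 = x)).card = k - q) ∧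
      (∀ i, Set.InjOn (F i) (Finset.Icc (1:ℤ) (n:ℤ))) ∧
      (∀ i, ∀ y ∈ Finset.Icc (1:ℤ) (n:ℤ),
        F i y ∈ Finset.Icc (1:ℤ) (n:ℤ) ∧ (F i y, y) ∈ S ∧ (F i y, y) ∉ T) ∧
      (∀ i j : Fin q, i ≠ j → ∀ y ∈ Finset.Icc (1:ℤ) (n:ℤ), F i y ≠ F j y) := by
  intro q
  induction q with
  | zero =>
    intro _
    exact ⟨finZeroElim, S, Finset.Subset.refl S,
      (by simpa using hrow), (by simpa using hcol),
      (fun i => i.elim0), (fun i => i.elim0), (fun i => i.elim0)⟩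
  | succ q ih =>
    intro hq1
    obtain ⟨F, T, hTS, hTr, hTc, hFinj, hFmem, hFdist⟩ := ih (Nat.le_of_succ_le hq1)
    have hkk : 1 ≤ k - q := by omega
    obtain ⟨f, hfinj, hfmem, hfsurj⟩ := hall_step n (k - q) hkk T
      (fun p hp => hsub (hTS hp)) hTr hTc
    set P : Finset (ℤ × ℤ) := (Finset.Icc (1:ℤ) (n:ℤ)).image (fun y => (f y, y)) with hP
    set T' : Finset (ℤ × ℤ) := T \ P with hT'
    have hmemP : ∀ p : ℤ × ℤ, p ∈ P ↔ ∃ y ∈ Finset.Icc (1:ℤ) (n:ℤ), (f y, y) = p := by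
      intro p; rw [hP, Finset.mem_image]
    set F' : Fin (q+1) → ℤ → ℤ := fun i => if h : (i : ℕ) < q then F ⟨i.1, h⟩ else f with hF'
    have hF'old : ∀ (i : Fin (q+1)) (h : (i:ℕ) < q), F' i = F ⟨i.1, h⟩ := by
      intro i h; rw [hF']; simp [h]
    have hF'new : ∀ (i : Fin (q+1)), ¬ ((i:ℕ) < q) → F' i = f := by
      intro i h; rw [hF']; simp [h]
    refine ⟨F', T', fun p hp => hTS (Finset.mem_sdiff.1 hp).1, ?_, ?_, ?_, ?_, ?_⟩
    · -- rows
      intro y hy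
      have key : T'.filter (fun p => p.2 = y) = (T.filter (fun p => p.2 = y)).erase (f y, y) := by
        ext p
        rw [Finset.mem_erase, Finset.mem_filter, hT', Finset.mem_sdiff, Finset.mem_filter]
        constructor
        · rintro ⟨⟨hpT, hpP⟩, hpy⟩
          refine ⟨?_, hpT, hpy⟩
          intro hcontra
          exact hpP ((hmemP p).2 ⟨y, hy, hcontra.symm⟩)
        · rintro ⟨hne, hpT, hpy⟩
          refine ⟨⟨hpT, ?_⟩, hpy⟩
          intro hpP
          rcases (hmemP p).1 hpP with ⟨y', hy', heq⟩
          have : y' = y := by rw [← hpy, ← heq]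
          exact hne (by rw [← heq, this])
      have hmemf : (f y, y) ∈ T.filter (fun p => p.2 = y) :=
        Finset.mem_filter.2 ⟨(hfmem y hy).2, rfl⟩
      rw [key, Finset.card_erase_of_mem hmemf, hTr y hy]; omega
    · -- cols
      intro x hx
      obtain ⟨y0, hy0, hfy0⟩ := hfsurj x hx
      have key : T'.filter (fun p => p.1 = x) = (T.filter (fun p => p.1 = x)).erase (x, y0) := by
        ext p
        rw [Finset.mem_erase, Finset.mem_filter, hT', Finset.mem_sdiff, Finset.mem_filter]
        constructor
        · rintro ⟨⟨hpT, hpP⟩, hpx⟩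
          refine ⟨?_, hpT, hpx⟩
          intro hcontra
          refine hpP ((hmemP p).2 ⟨y0, hy0, ?_⟩)
          rw [hcontra, hfy0]
        · rintro ⟨hne, hpT, hpx⟩
          refine ⟨⟨hpT, ?_⟩, hpx⟩
          intro hpP
          rcases (hmemP p).1 hpP with ⟨y', hy', heq⟩
          have hfy' : f y' = x := by rw [← hpx, ← heq]
          have : y' = y0 := hfinj (Finset.mem_coe.2 hy') (Finset.mem_coe.2 hy0)
            (by rw [hfy', hfy0])
          apply hne
          rw [← heq, hfy', this]
      have hxy0T : (x, y0) ∈ T := by rw [← hfy0]; exact (hfmem y0 hy0).2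
      have hmemf : (x, y0) ∈ T.filter (fun p => p.1 = x) := Finset.mem_filter.2 ⟨hxy0T, rfl⟩
      rw [key, Finset.card_erase_of_mem hmemf, hTc x hx]; omega
    · -- InjOn
      intro i
      by_cases h : (i:ℕ) < q
      · rw [hF'old i h]; exact hFinj _
      · rw [hF'new i h]; exact hfinj
    · -- membership
      intro i y hy
      by_cases h : (i:ℕ) < q
      · rw [hF'old i h]
        obtain ⟨h1, h2, h3⟩ := hFmem ⟨i.1, h⟩ y hy
        exact ⟨h1, h2, fun hc => h3 (Finset.mem_sdiff.1 hc).1⟩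
      · rw [hF'new i h]
        refine ⟨(hfmem y hy).1, hTS (hfmem y hy).2, ?_⟩
        intro hc
        exact (Finset.mem_sdiff.1 hc).2 ((hmemP _).2 ⟨y, hy, rfl⟩)
    · -- distinctness
      intro i j hij y hy
      by_cases hi : (i:ℕ) < q <;> by_cases hj : (j:ℕ) < q
      · rw [hF'old i hi, hF'old j hj]
        exact hFdist _ _ (fun hc => hij (by
          have := congrArg (fun z : Fin q => (z : ℕ)) hc
          exact Fin.ext this)) y hy
      · rw [hF'old i hi, hF'new j hj]
        intro hc
        have h1 := (hFmem ⟨i.1, hi⟩ y hy).2.2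
        exact h1 (by rw [hc]; exact (hfmem y hy).2)
      · rw [hF'new i hi, hF'old j hj]
        intro hc
        have h1 := (hFmem ⟨j.1, hj⟩ y hy).2.2
        exact h1 (by rw [← hc]; exact (hfmem y hy).2)
      · exact absurd (Fin.ext (by omega : (i:ℕ) = (j:ℕ))) hij

/-- Adjusting n: from a k-regular no-(k+1)-in-line set in `[1,n]²` with even reserve h,
one obtains a no-(k+1)-in-line set of size `k·n'` in `[1,n']²` for `n' = n + h/2`. -/
theorem stmt5 (n k h : ℕ) (hh : h ≤ k) (hk : k ≤ n) (hev : 2 ∣ h)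
    (S : Finset (ℤ × ℤ)) (hsub : S ⊆ gridZ n)
    (hrow : ∀ y ∈ Finset.Icc (1 : ℤ) (n : ℤ), (S.filter (fun p => p.2 = y)).card = k)
    (hcol : ∀ x ∈ Finset.Icc (1 : ℤ) (n : ℤ), (S.filter (fun p => p.1 = x)).card = k)
    (hgen : ∀ a b c : ℝ, a ≠ 0 → b ≠ 0 →
      (S.filter (fun p => a * (p.1 : ℝ) + b * (p.2 : ℝ) = c)).card ≤ k - h) :
    ∃ S'' : Finset (ℤ × ℤ), S'' ⊆ gridZ (n + h / 2) ∧
      S''.card = k * (n + h / 2) ∧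
      (∀ a b c : ℝ, (a, b) ≠ (0, 0) →
        (S''.filter (fun p => a * (p.1 : ℝ) + b * (p.2 : ℝ) = c)).card ≤ k) := by
  classical
  set q : ℕ := h / 2 with hqdef
  have hq2 : q + q = h := by omega
  have hqk : q ≤ k := by omega
  set I : Finset ℤ := Finset.Icc (1:ℤ) (n:ℤ) with hIdef
  set Ik : Finset ℤ := Finset.Icc (1:ℤ) (k:ℤ) with hIkdef
  have hIkI : Ik ⊆ I := Finset.Icc_subset_Icc le_rfl (by exact_mod_cast hk)
  have hIcard : I.card = n := by rw [hIdef, Int.card_Icc]; omega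
  have hIkcard : Ik.card = k := by rw [hIkdef, Int.card_Icc]; omega
  obtain ⟨F, T, hTS, hTr, hTc, hFinj, hFmem, hFdist⟩ := matchings n k S hsub hrow hcol q hqk
  -- the matchings, new rows, new columns
  set M : Fin q → Finset (ℤ × ℤ) := fun i => Ik.image (fun y => (F i y, y)) with hMdef
  set R : Finset (ℤ × ℤ) := Finset.univ.biUnion M with hRdef
  set A : Fin q → Finset (ℤ × ℤ) :=
    fun i => Ik.image (fun y => (F i y, (n : ℤ) + (i : ℕ) + 1)) with hAdef
  set AA : Finset (ℤ × ℤ) := Finset.univ.biUnion A with hAAdef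
  set B : Finset (ℤ × ℤ) := (Finset.Icc ((n:ℤ)+1) ((n:ℤ)+(q:ℤ))) ×ˢ Ik with hBdef
  set S'' : Finset (ℤ × ℤ) := ((S \ R) ∪ AA) ∪ B with hSdef
  have memM : ∀ (i : Fin q) (p : ℤ × ℤ), p ∈ M i ↔ ∃ y ∈ Ik, (F i y, y) = p := by
    intro i p; rw [hMdef]; exact Finset.mem_image
  have memA : ∀ (i : Fin q) (p : ℤ × ℤ),
      p ∈ A i ↔ ∃ y ∈ Ik, (F i y, (n : ℤ) + (i : ℕ) + 1) = p := by
    intro i p; rw [hAdef]; exact Finset.mem_image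
  have memB : ∀ p : ℤ × ℤ, p ∈ B ↔ ((n:ℤ)+1 ≤ p.1 ∧ p.1 ≤ (n:ℤ)+(q:ℤ) ∧ p.2 ∈ Ik) := by
    intro p; rw [hBdef, Finset.mem_product, Finset.mem_Icc]; tauto
  have memAA : ∀ p ∈ AA, p.1 ∈ I ∧ (n:ℤ)+1 ≤ p.2 ∧ p.2 ≤ (n:ℤ)+(q:ℤ) := by
    intro p hp
    rcases Finset.mem_biUnion.1 hp with ⟨i, _, hpi⟩
    rcases (memA i p).1 hpi with ⟨y, hy, rfl⟩
    refine ⟨(hFmem i y (hIkI hy)).1, by omega, ?_⟩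
    have : ((i : ℕ) : ℤ) < (q : ℤ) := by exact_mod_cast i.2
    omega
  have hMS : ∀ i, M i ⊆ S := by
    intro i p hp
    rcases (memM i p).1 hp with ⟨y, hy, rfl⟩
    exact (hFmem i y (hIkI hy)).2.1
  have hRS : R ⊆ S := by
    intro p hp; rcases Finset.mem_biUnion.1 hp with ⟨i, _, hpi⟩; exact hMS i hpi
  have hMcard : ∀ i, (M i).card = k := by
    intro i
    rw [hMdef]
    rw [Finset.card_image_of_injOn (fun y₁ _ y₂ _ hee => congrArg Prod.snd hee)]
    exact hIkcard
  have hMdisj : ∀ i j : Fin q, i ≠ j → Disjoint (M i) (M j) := by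
    intro i j hij
    rw [Finset.disjoint_left]
    intro p hpi hpj
    rcases (memM j p).1 hpj with ⟨y', hy', heq'⟩
    rcases (memM i p).1 hpi with ⟨y, hy, rfl⟩
    have heq : (F j y', y') = (F i y, y) := heq'
    have hyy : y' = y := congrArg Prod.snd heq
    subst hyy
    exact hFdist j i (fun hc => hij hc.symm) y' (hIkI hy) (congrArg Prod.fst heq)
  have hRcard : R.card = q * k := by
    rw [hRdef, Finset.card_biUnion (fun i _ j _ hij => hMdisj i j hij)]
    simp [hMcard]
  have hAcard : ∀ i, (A i).card = k := by
    intro i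
    rw [hAdef]
    rw [Finset.card_image_of_injOn ?_]
    · exact hIkcard
    · intro y₁ h₁ y₂ h₂ hee
      exact hFinj i (hIkI h₁) (hIkI h₂) (congrArg Prod.fst hee)
  have hAdisj : ∀ i j : Fin q, i ≠ j → Disjoint (A i) (A j) := by
    intro i j hij
    rw [Finset.disjoint_left]
    intro p hpi hpj
    rcases (memA j p).1 hpj with ⟨y', hy', heq'⟩
    rcases (memA i p).1 hpi with ⟨y, hy, rfl⟩
    have heq : (F j y', (n:ℤ)+(j:ℕ)+1) = (F i y, (n:ℤ)+(i:ℕ)+1) := heq'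
    have : ((i:ℕ) : ℤ) = ((j:ℕ) : ℤ) := by
      have h2 := congrArg Prod.snd heq; simp only [] at h2; omega
    exact hij (Fin.ext (by exact_mod_cast this))
  have hAAcard : AA.card = q * k := by
    rw [hAAdef, Finset.card_biUnion (fun i _ j _ hij => hAdisj i j hij)]
    simp [hAcard]
  have hBcard : B.card = q * k := by
    rw [hBdef, Finset.card_product, hIkcard, Int.card_Icc]
    have : ((n:ℤ) + q + 1 - ((n:ℤ)+1)).toNat = q := by omega
    rw [this]
  have hScard : S.card = n * k := by
    have h1 : S.filter (fun p => p.2 ∈ I) = S := by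
      apply Finset.filter_true_of_mem
      intro p hp
      have := (mem_gridZ).1 (hsub hp)
      rw [hIdef, Finset.mem_Icc]; exact ⟨this.2.2.1, this.2.2.2⟩
    have := fiber_sum_card (T := S) (W := I) Prod.snd hrow
    rw [h1, hIcard] at this
    exact this
  have hfilter_split : ∀ (P : ℤ × ℤ → Prop) (inst : DecidablePred P),
      @Finset.filter _ P inst S'' =
        ((@Finset.filter _ P inst (S \ R) ∪ @Finset.filter _ P inst AA)
          ∪ @Finset.filter _ P inst B) := by
    intro P inst; rw [hSdef, Finset.filter_union, Finset.filter_union]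
  have hSRfilter : ∀ (P : ℤ × ℤ → Prop) (inst : DecidablePred P),
      @Finset.filter _ P inst (S \ R) =
        @Finset.filter _ P inst S \ @Finset.filter _ P inst R := by
    intro P inst; ext p
    simp only [Finset.mem_filter, Finset.mem_sdiff]
    tauto
  have hAAmem' : ∀ p ∈ AA, ∃ i : Fin q, p.2 = (n:ℤ) + (i:ℕ) + 1 := by
    intro p hp
    rcases Finset.mem_biUnion.1 hp with ⟨i, _, hpi⟩
    rcases (memA i p).1 hpi with ⟨y, hy, rfl⟩
    exact ⟨i, rfl⟩
  -- row fiber bound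
  have L1 : ∀ y0 : ℤ, (S''.filter (fun p => p.2 = y0)).card ≤ k := by
    intro y0
    rw [hfilter_split]
    refine le_trans (Finset.card_union_le _ _) ?_
    refine le_trans (Nat.add_le_add_right (Finset.card_union_le _ _) _) ?_
    by_cases hy0n : 1 ≤ y0 ∧ y0 ≤ (n:ℤ)
    · have hy0I : y0 ∈ I := by rw [hIdef, Finset.mem_Icc]; exact hy0n
      have hAAe : AA.filter (fun p => p.2 = y0) = ∅ := by
        rw [Finset.filter_eq_empty_iff]
        intro p hp hc
        have := (memAA p hp).2.1
        omega
      by_cases hy0k : y0 ≤ (k:ℤ)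
      · have hy0Ik : y0 ∈ Ik := by rw [hIkdef, Finset.mem_Icc]; exact ⟨hy0n.1, hy0k⟩
        have hMfilt : ∀ i : Fin q, (M i).filter (fun p => p.2 = y0) = {(F i y0, y0)} := by
          intro i
          ext p
          simp only [Finset.mem_filter, Finset.mem_singleton]
          constructor
          · rintro ⟨hpM, hpy⟩
            rcases (memM i p).1 hpM with ⟨y, hy, rfl⟩
            have : y = y0 := hpy
            rw [this]
          · rintro rfl
            exact ⟨(memM i _).2 ⟨y0, hy0Ik, rfl⟩, rfl⟩
        have hRfilt : (R.filter (fun p => p.2 = y0)).card = q := by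
          rw [hRdef, Finset.filter_biUnion]
          rw [Finset.card_biUnion (fun i _ j _ hij =>
            Finset.disjoint_filter_filter (hMdisj i j hij))]
          simp [hMfilt]
        have hSRle : ((S \ R).filter (fun p => p.2 = y0)).card = k - q := by
          rw [hSRfilter, Finset.card_sdiff_of_subset
            (Finset.filter_subset_filter _ hRS), hrow y0 hy0I, hRfilt]
        have hBle : (B.filter (fun p => p.2 = y0)).card ≤ q := by
          have := Finset.card_le_card_of_injOn (f := Prod.fst)
            (s := B.filter (fun p => p.2 = y0)) (t := Finset.Icc ((n:ℤ)+1) ((n:ℤ)+(q:ℤ)))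
            (fun p hp => by
              have h1 := (memB p).1 (Finset.mem_filter.1 hp).1
              rw [Finset.mem_coe, Finset.mem_Icc]; exact ⟨h1.1, h1.2.1⟩)
            (fun p hp p' hp' hee => by
              have e2 : p.2 = p'.2 := by
                rw [(Finset.mem_filter.1 hp).2, (Finset.mem_filter.1 hp').2]
              exact Prod.ext hee e2)
          rw [Int.card_Icc] at this
          omega
        rw [hSRle, hAAe]
        simp only [Finset.card_empty]
        omega
      · have hBe : B.filter (fun p => p.2 = y0) = ∅ := by
          rw [Finset.filter_eq_empty_iff]
          intro p hp hc
          have h2 := ((memB p).1 hp).2.2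
          rw [hIkdef, Finset.mem_Icc] at h2
          omega
        have hle : ((S \ R).filter (fun p => p.2 = y0)).card ≤ k := by
          refine le_trans (Finset.card_le_card ?_) (le_of_eq (hrow y0 hy0I))
          refine Finset.filter_subset_filter _ ?_
          exact Finset.sdiff_subset
        rw [hAAe, hBe]
        simpa using hle
    · have hSe : (S \ R).filter (fun p => p.2 = y0) = ∅ := by
        rw [Finset.filter_eq_empty_iff]
        intro p hp hc
        have := (mem_gridZ).1 (hsub (Finset.mem_sdiff.1 hp).1)
        omega
      have hBe : B.filter (fun p => p.2 = y0) = ∅ := by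
        rw [Finset.filter_eq_empty_iff]
        intro p hp hc
        have h2 := ((memB p).1 hp).2.2
        rw [hIkdef, Finset.mem_Icc] at h2
        omega
      have hAAle : (AA.filter (fun p => p.2 = y0)).card ≤ k := by
        by_cases hex : ∃ i : Fin q, (n:ℤ) + (i:ℕ) + 1 = y0
        · obtain ⟨i, hi⟩ := hex
          refine le_trans (Finset.card_le_card ?_) (le_of_eq (hAcard i))
          intro p hp
          rcases Finset.mem_filter.1 hp with ⟨hpAA, hpy⟩
          rcases Finset.mem_biUnion.1 hpAA with ⟨i', _, hpi'⟩
          rcases (memA i' p).1 hpi' with ⟨y, hy, rfl⟩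
          have : ((i':ℕ) : ℤ) = ((i:ℕ) : ℤ) := by
            simp only [] at hpy
            omega
          have hii : i' = i := Fin.ext (by exact_mod_cast this)
          rw [← hii]
          exact (memA i' _).2 ⟨y, hy, rfl⟩
        · have : AA.filter (fun p => p.2 = y0) = ∅ := by
            rw [Finset.filter_eq_empty_iff]
            intro p hp hc
            rcases hAAmem' p hp with ⟨i, hi⟩
            exact hex ⟨i, by omega⟩
          rw [this]; simp
      rw [hSe, hBe]
      simpa using hAAle
  -- column fiber bound
  have L2 : ∀ x0 : ℤ, (S''.filter (fun p => p.1 = x0)).card ≤ k := by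
    intro x0
    rw [hfilter_split]
    refine le_trans (Finset.card_union_le _ _) ?_
    refine le_trans (Nat.add_le_add_right (Finset.card_union_le _ _) _) ?_
    by_cases hx0n : 1 ≤ x0 ∧ x0 ≤ (n:ℤ)
    · have hx0I : x0 ∈ I := by rw [hIdef, Finset.mem_Icc]; exact hx0n
      have hBe : B.filter (fun p => p.1 = x0) = ∅ := by
        rw [Finset.filter_eq_empty_iff]
        intro p hp hc
        have := ((memB p).1 hp).1
        omega
      have hMfilt : ∀ i : Fin q, (M i).filter (fun p => p.1 = x0)
          = (Ik.filter (fun y => F i y = x0)).image (fun y => (F i y, y)) := by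
        intro i
        ext p
        constructor
        · intro hp
          rcases Finset.mem_filter.1 hp with ⟨hpM, hpx⟩
          rcases (memM i p).1 hpM with ⟨y, hy, rfl⟩
          exact Finset.mem_image.2 ⟨y, Finset.mem_filter.2 ⟨hy, hpx⟩, rfl⟩
        · intro hp
          rcases Finset.mem_image.1 hp with ⟨y, hy, rfl⟩
          rcases Finset.mem_filter.1 hy with ⟨hy1, hy2⟩
          exact Finset.mem_filter.2 ⟨(memM i _).2 ⟨y, hy1, rfl⟩, hy2⟩
      have hAfilt : ∀ i : Fin q, (A i).filter (fun p => p.1 = x0)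
          = (Ik.filter (fun y => F i y = x0)).image
              (fun y => (F i y, (n:ℤ) + (i:ℕ) + 1)) := by
        intro i
        ext p
        constructor
        · intro hp
          rcases Finset.mem_filter.1 hp with ⟨hpA, hpx⟩
          rcases (memA i p).1 hpA with ⟨y, hy, rfl⟩
          exact Finset.mem_image.2 ⟨y, Finset.mem_filter.2 ⟨hy, hpx⟩, rfl⟩
        · intro hp
          rcases Finset.mem_image.1 hp with ⟨y, hy, rfl⟩
          rcases Finset.mem_filter.1 hy with ⟨hy1, hy2⟩
          exact Finset.mem_filter.2 ⟨(memA i _).2 ⟨y, hy1, rfl⟩, hy2⟩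
      have hceq : ∀ i : Fin q, ((A i).filter (fun p => p.1 = x0)).card
          = ((M i).filter (fun p => p.1 = x0)).card := by
        intro i
        rw [hMfilt i, hAfilt i]
        rw [Finset.card_image_of_injOn (fun y₁ h₁ y₂ h₂ hee =>
          hFinj i (hIkI (Finset.mem_filter.1 h₁).1) (hIkI (Finset.mem_filter.1 h₂).1)
            (congrArg Prod.fst hee))]
        rw [Finset.card_image_of_injOn (fun y₁ _ y₂ _ hee => congrArg Prod.snd hee)]
      have hAAc : (AA.filter (fun p => p.1 = x0)).card
          = (R.filter (fun p => p.1 = x0)).card := by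
        rw [hAAdef, hRdef, Finset.filter_biUnion, Finset.filter_biUnion]
        rw [Finset.card_biUnion (fun i _ j _ hij =>
          Finset.disjoint_filter_filter (hAdisj i j hij))]
        rw [Finset.card_biUnion (fun i _ j _ hij =>
          Finset.disjoint_filter_filter (hMdisj i j hij))]
        exact Finset.sum_congr rfl (fun i _ => hceq i)
      have hRle : (R.filter (fun p => p.1 = x0)).card ≤ k := by
        refine le_trans (Finset.card_le_card (Finset.filter_subset_filter _ hRS)) ?_
        exact le_of_eq (hcol x0 hx0I)
      have hSRc : ((S \ R).filter (fun p => p.1 = x0)).card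
          = k - (R.filter (fun p => p.1 = x0)).card := by
        rw [hSRfilter, Finset.card_sdiff_of_subset (Finset.filter_subset_filter _ hRS),
          hcol x0 hx0I]
      rw [hSRc, hAAc, hBe]
      simp only [Finset.card_empty]
      omega
    · have hSe : (S \ R).filter (fun p => p.1 = x0) = ∅ := by
        rw [Finset.filter_eq_empty_iff]
        intro p hp hc
        have := (mem_gridZ).1 (hsub (Finset.mem_sdiff.1 hp).1)
        omega
      have hAAe : AA.filter (fun p => p.1 = x0) = ∅ := by
        rw [Finset.filter_eq_empty_iff]
        intro p hp hc
        have h1 := (memAA p hp).1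
        rw [hIdef, Finset.mem_Icc] at h1
        omega
      have hBle : (B.filter (fun p => p.1 = x0)).card ≤ k := by
        have := Finset.card_le_card_of_injOn (f := Prod.snd)
          (s := B.filter (fun p => p.1 = x0)) (t := Ik)
          (fun p hp => ((memB p).1 (Finset.mem_filter.1 hp).1).2.2)
          (fun p hp p' hp' hee => by
            have e1 : p.1 = p'.1 := by
              rw [(Finset.mem_filter.1 hp).2, (Finset.mem_filter.1 hp').2]
            exact Prod.ext e1 hee)
        rw [hIkcard] at this
        exact this
      rw [hSe, hAAe]
      simpa using hBle
  have hcast : ((n + h / 2 : ℕ) : ℤ) = (n:ℤ) + (q:ℤ) := by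
    rw [hqdef]; push_cast; ring
  refine ⟨S'', ?_, ?_, ?_⟩
  · -- subset of grid
    intro p hp
    rw [mem_gridZ, hcast]
    rcases Finset.mem_union.1 hp with hp' | hpB
    · rcases Finset.mem_union.1 hp' with hpS | hpA
      · have hg := (mem_gridZ).1 (hsub (Finset.mem_sdiff.1 hpS).1)
        have hq0 : (0:ℤ) ≤ (q:ℤ) := Int.natCast_nonneg q
        omega
      · have h1 := (memAA p hpA).1
        rw [hIdef, Finset.mem_Icc] at h1
        have h2 := (memAA p hpA).2
        omega
    · have h1 := (memB p).1 hpB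
      have h2 := h1.2.2
      rw [hIkdef, Finset.mem_Icc] at h2
      have hkn : (k:ℤ) ≤ (n:ℤ) := by exact_mod_cast hk
      omega
  · -- cardinality
    have hd1 : Disjoint (S \ R) AA := by
      rw [Finset.disjoint_left]
      intro p hp hpA
      have hg := (mem_gridZ).1 (hsub (Finset.mem_sdiff.1 hp).1)
      have h2 := (memAA p hpA).2.1
      omega
    have hd2 : Disjoint ((S \ R) ∪ AA) B := by
      rw [Finset.disjoint_left]
      intro p hp hpB
      have hB1 := ((memB p).1 hpB).1
      rcases Finset.mem_union.1 hp with hpS | hpA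
      · have hg := (mem_gridZ).1 (hsub (Finset.mem_sdiff.1 hpS).1)
        omega
      · have h1 := (memAA p hpA).1
        rw [hIdef, Finset.mem_Icc] at h1
        omega
    rw [hSdef, Finset.card_union_of_disjoint hd2, Finset.card_union_of_disjoint hd1,
      Finset.card_sdiff_of_subset hRS, hScard, hRcard, hAAcard, hBcard]
    have hle : q * k ≤ n * k := Nat.mul_le_mul_right k (le_trans hqk hk)
    have hgoal : k * (n + q) = n * k + q * k := by ring
    omega
  · -- lines
    intro a b c hab
    by_cases ha : a = 0
    · by_cases hb : b = 0
      · exact absurd (by rw [ha, hb]) hab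
      · rcases Finset.eq_empty_or_nonempty
          (S''.filter (fun p => a * (p.1:ℝ) + b * (p.2:ℝ) = c)) with he | hne
        · rw [he]; simp
        · obtain ⟨p0, hp0⟩ := hne
          have hp0f := Finset.mem_filter.1 hp0
          have hsubf : S''.filter (fun p => a * (p.1:ℝ) + b * (p.2:ℝ) = c)
              ⊆ S''.filter (fun p => p.2 = p0.2) := by
            intro p hp
            rcases Finset.mem_filter.1 hp with ⟨hpS, hpc⟩
            refine Finset.mem_filter.2 ⟨hpS, ?_⟩
            rw [ha] at hpc
            have hc0 := hp0f.2
            rw [ha] at hc0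
            simp only [zero_mul, zero_add] at hpc hc0
            have : (p.2 : ℝ) = (p0.2 : ℝ) := mul_left_cancel₀ hb (by rw [hpc, hc0])
            exact_mod_cast this
          exact le_trans (Finset.card_le_card hsubf) (L1 p0.2)
    · by_cases hb : b = 0
      · rcases Finset.eq_empty_or_nonempty
          (S''.filter (fun p => a * (p.1:ℝ) + b * (p.2:ℝ) = c)) with he | hne
        · rw [he]; simp
        · obtain ⟨p0, hp0⟩ := hne
          have hp0f := Finset.mem_filter.1 hp0
          have hsubf : S''.filter (fun p => a * (p.1:ℝ) + b * (p.2:ℝ) = c)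
              ⊆ S''.filter (fun p => p.1 = p0.1) := by
            intro p hp
            rcases Finset.mem_filter.1 hp with ⟨hpS, hpc⟩
            refine Finset.mem_filter.2 ⟨hpS, ?_⟩
            rw [hb] at hpc
            have hc0 := hp0f.2
            rw [hb] at hc0
            simp only [zero_mul, add_zero] at hpc hc0
            have : (p.1 : ℝ) = (p0.1 : ℝ) := mul_left_cancel₀ ha (by rw [hpc, hc0])
            exact_mod_cast this
          exact le_trans (Finset.card_le_card hsubf) (L2 p0.1)
      · rw [hfilter_split]
        refine le_trans (Finset.card_union_le _ _) ?_
        refine le_trans (Nat.add_le_add_right (Finset.card_union_le _ _) _) ?_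
        have hSRg : (((S \ R)).filter (fun p => a * (p.1:ℝ) + b * (p.2:ℝ) = c)).card
            ≤ k - h := by
          refine le_trans (Finset.card_le_card
            (Finset.filter_subset_filter _ Finset.sdiff_subset)) (hgen a b c ha hb)
        have hAAg : ((AA).filter (fun p => a * (p.1:ℝ) + b * (p.2:ℝ) = c)).card ≤ q := by
          have hcle := Finset.card_le_card_of_injOn (f := Prod.snd)
            (s := AA.filter (fun p => a * (p.1:ℝ) + b * (p.2:ℝ) = c))
            (t := Finset.Icc ((n:ℤ)+1) ((n:ℤ)+(q:ℤ)))
            (fun p hp => by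
              have h1 := memAA p (Finset.mem_filter.1 hp).1
              rw [Finset.mem_coe, Finset.mem_Icc]; exact ⟨h1.2.1, h1.2.2⟩)
            (fun p hp p' hp' hee => by
              have e1 := (Finset.mem_filter.1 hp).2
              have e2 := (Finset.mem_filter.1 hp').2
              have hsnd : (p.2 : ℝ) = (p'.2 : ℝ) := by exact_mod_cast hee
              have : a * (p.1:ℝ) = a * (p'.1:ℝ) := by
                have := e1.trans e2.symm
                rw [hsnd] at this
                linarith
              have hfst : (p.1 : ℝ) = (p'.1 : ℝ) := mul_left_cancel₀ ha this
              exact Prod.ext (by exact_mod_cast hfst) hee)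
          rw [Int.card_Icc] at hcle
          omega
        have hBg : ((B).filter (fun p => a * (p.1:ℝ) + b * (p.2:ℝ) = c)).card ≤ q := by
          have hcle := Finset.card_le_card_of_injOn (f := Prod.fst)
            (s := B.filter (fun p => a * (p.1:ℝ) + b * (p.2:ℝ) = c))
            (t := Finset.Icc ((n:ℤ)+1) ((n:ℤ)+(q:ℤ)))
            (fun p hp => by
              have h1 := (memB p).1 (Finset.mem_filter.1 hp).1
              rw [Finset.mem_coe, Finset.mem_Icc]; exact ⟨h1.1, h1.2.1⟩)
            (fun p hp p' hp' hee => by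
              have e1 := (Finset.mem_filter.1 hp).2
              have e2 := (Finset.mem_filter.1 hp').2
              have hfst : (p.1 : ℝ) = (p'.1 : ℝ) := by exact_mod_cast hee
              have : b * (p.2:ℝ) = b * (p'.2:ℝ) := by
                have := e1.trans e2.symm
                rw [hfst] at this
                linarith
              have hsnd : (p.2 : ℝ) = (p'.2 : ℝ) := mul_left_cancel₀ hb this
              exact Prod.ext hee (by exact_mod_cast hsnd))
          rw [Int.card_Icc] at hcle
          omega
        refine le_trans (Nat.add_le_add (Nat.add_le_add hSRg hAAg) hBg) ?_
        omega
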